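/- Let T₇ be a contraction on H, T_i a bounded operator commuting with T₇, and F̃_i, F̃_{7-i} bounded operators on the closure of Ran D_{T₇*} satisfying D_{T₇*} T_i* = F̃_i D_{T₇*} + F̃_{7-i}* D_{T₇*} T₇*. Then for all n ≥ 0 and ξ in the closure of Ran D_{T₇*}: T₇ⁿ D_{T₇*} F̃_i* ξ + T₇^{n+1} D_{T₇*} F̃_{7-i} ξ = T_i T₇ⁿ D_{T₇*} ξ. -/

import Mathlib

open ContinuousLinearMap

/-- Let `T₇` be a contraction, `T_i` a bounded operator commuting with `T₇`, and
`F̃_i, F̃_{7-i}` bounded operators satisfying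
`D_{T₇*} T_i* = F̃_i D_{T₇*} + F̃_{7-i}* D_{T₇*} T₇*`.  Then for every `n ≥ 0` and `ξ`
in the closure of `Ran D_{T₇*}`:
`T₇ⁿ D_{T₇*} F̃_i* ξ + T₇ⁿ⁺¹ D_{T₇*} F̃_{7-i} ξ = T_i T₇ⁿ D_{T₇*} ξ`. -/
theorem model_intertwining_identity
    {H : Type*} [NormedAddCommGroup H] [InnerProductSpace ℂ H] [CompleteSpace H]
    (T7 Ti DTs Fti Ft7mi : H →L[ℂ] H)
    (hT7 : ‖T7‖ ≤ 1) (hcomm : Commute Ti T7)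
    (hDTs : DTs.IsPositive) (hDTs2 : DTs ∘L DTs = 1 - T7 ∘L adjoint T7)
    (hfund : DTs ∘L adjoint Ti = Fti ∘L DTs + adjoint Ft7mi ∘L DTs ∘L adjoint T7) :
    ∀ (n : ℕ) (ξ : H), ξ ∈ closure (Set.range ⇑DTs) →
      (T7 ^ n) (DTs (adjoint Fti ξ)) + (T7 ^ (n + 1)) (DTs (Ft7mi ξ))
        = Ti ((T7 ^ n) (DTs ξ)) := by
  intro n ξ _
  have hsa : adjoint DTs = DTs := hDTs.isSelfAdjoint.adjoint_eq
  have key : Ti ∘L DTs = DTs ∘L adjoint Fti + (T7 ∘L DTs) ∘L Ft7mi := by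
    have h := congrArg adjoint hfund
    simp only [adjoint_comp, adjoint_adjoint, hsa, map_add] at h
    exact h
  have hkey : Ti (DTs ξ) = DTs (adjoint Fti ξ) + T7 (DTs (Ft7mi ξ)) := by
    have := congrArg (fun (A : H →L[ℂ] H) => A ξ) key
    simpa using this
  have hc : Ti ((T7 ^ n) (DTs ξ)) = (T7 ^ n) (Ti (DTs ξ)) := by
    have h := congrArg (fun (A : H →L[ℂ] H) => A (DTs ξ)) (hcomm.pow_right n).eq
    simpa [mul_apply] using h
  rw [hc, hkey, map_add, pow_succ, mul_apply_eq_comp]
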